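/- Let L be an m-dimensional 3-Lie algebra (m ≥ 4) over a field with basis x₁,…,x_m and nonzero brackets [x₁,x₂,x_i] = x_{i−1} for 4 ≤ i ≤ m (all other basis brackets zero). Then L is a nilpotent 3-Lie algebra, A = span{x₂,…,x_m} is an (m−1)-dimensional hypo-abelian ideal, I = span{x₃,…,x_m} is an (m−2)-dimensional abelian ideal, α(L) = m−1, and β(L) = m−2. -/

import Mathlib

open Module

/-- A 3-Lie algebra structure on a vector space `L` over `F`: a trilinear,
fully alternating bracket satisfying the fundamental (generalized Jacobi) identity. -/
structure ThreeLie (F : Type*) [Field F] (L : Type*) [AddCommGroup L] [Module F L] where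
  br : L →ₗ[F] L →ₗ[F] L →ₗ[F] L
  alt₁₂ : ∀ x z : L, br x x z = 0
  alt₂₃ : ∀ x y : L, br x y y = 0
  fund : ∀ x₁ x₂ x₃ y₂ y₃ : L,
    br (br x₁ x₂ x₃) y₂ y₃ =
      br (br x₁ y₂ y₃) x₂ x₃ + br x₁ (br x₂ y₂ y₃) x₃ + br x₁ x₂ (br x₃ y₂ y₃)

namespace ThreeLie

variable {F : Type*} [Field F] {L : Type*} [AddCommGroup L] [Module F L] (T : ThreeLie F L)

/-- `I` is an ideal: `[I, L, L] ⊆ I`. -/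
def IsIdeal (I : Submodule F L) : Prop := ∀ a ∈ I, ∀ x y : L, T.br a x y ∈ I

/-- `I` is an abelian ideal: an ideal with `[I, I, L] = 0`. -/
def IsAbelianIdeal (I : Submodule F L) : Prop :=
  T.IsIdeal I ∧ ∀ a ∈ I, ∀ b ∈ I, ∀ x : L, T.br a b x = 0

/-- `A` is an abelian subalgebra: `[A, A, A] = 0`. -/
def IsAbelianSubalgebra (A : Submodule F L) : Prop :=
  ∀ a ∈ A, ∀ b ∈ A, ∀ c ∈ A, T.br a b c = 0

/-- `I` is a hypo-abelian ideal: an ideal with `[I,I,I] = 0` but `[I,I,L] ≠ 0`. -/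
def IsHypoAbelianIdeal (I : Submodule F L) : Prop :=
  T.IsIdeal I ∧ T.IsAbelianSubalgebra I ∧ ¬ (∀ a ∈ I, ∀ b ∈ I, ∀ x : L, T.br a b x = 0)

/-- The derived algebra `L¹ = [L, L, L]`. -/
def derived : Submodule F L := Submodule.span F {z | ∃ x y w : L, z = T.br x y w}

/-- The center `Z(L)`. -/
def center : Submodule F L where
  carrier := {x | ∀ y z : L, T.br x y z = 0}
  add_mem' := by
    intro a b ha hb y z
    simp [map_add, LinearMap.add_apply, ha y z, hb y z]
  zero_mem' := by intro y z; simp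
  smul_mem' := by
    intro c a ha y z
    simp [map_smul, LinearMap.smul_apply, ha y z]

/-- The lower central series. -/
def lcs : ℕ → Submodule F L
  | 0 => ⊤
  | n + 1 => Submodule.span F {z | ∃ a ∈ lcs n, ∃ x y : L, z = T.br a x y}

/-- Nilpotency. -/
def IsNilpotent : Prop := ∃ s : ℕ, T.lcs s = ⊥

end ThreeLie

namespace ThreeLie

variable {F : Type*} [Field F] {L : Type*} [AddCommGroup L] [Module F L] (T : ThreeLie F L)

lemma swap12 (a b c : L) : T.br a b c = - T.br b a c := by
  have h := T.alt₁₂ (a + b) c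
  simp only [map_add, LinearMap.add_apply, T.alt₁₂, zero_add, add_zero] at h
  exact eq_neg_of_add_eq_zero_right h

lemma swap23 (a b c : L) : T.br a b c = - T.br a c b := by
  have h := T.alt₂₃ a (b + c)
  simp only [map_add, LinearMap.add_apply, T.alt₂₃, zero_add, add_zero] at h
  exact eq_neg_of_add_eq_zero_right h

lemma swap13 (a b c : L) : T.br a b c = - T.br c b a := by
  rw [T.swap12, T.swap23 b a c, neg_neg, T.swap12 b c a]

lemma alt₁₃ (a b : L) : T.br a b a = 0 := by
  rw [T.swap12, T.alt₂₃, neg_zero]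

lemma mem_of_basis {m : ℕ} (x : Basis (Fin m) F L) (N : Submodule F L) (f : L →ₗ[F] L)
    (h : ∀ k, f (x k) ∈ N) (w : L) : f w ∈ N := by
  have hle : Submodule.span F (Set.range x) ≤ N.comap f :=
    Submodule.span_le.mpr (by rintro _ ⟨k, rfl⟩; exact h k)
  have hw : w ∈ Submodule.span F (Set.range x) := by rw [x.span_eq]; trivial
  exact hle hw

lemma mem_of_basis₂ {m : ℕ} (x : Basis (Fin m) F L) (N : Submodule F L) (a : L)
    (h : ∀ j k, T.br a (x j) (x k) ∈ N) (v w : L) : T.br a v w ∈ N := by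
  have h2 : ∀ j w, T.br a (x j) w ∈ N := fun j w =>
    mem_of_basis x N (T.br a (x j)) (h j) w
  exact mem_of_basis x N ((T.br a).flip w) (fun j => by simpa using h2 j w) v

lemma mem_of_basis₃ {m : ℕ} (x : Basis (Fin m) F L) (N : Submodule F L)
    (h : ∀ i j k, T.br (x i) (x j) (x k) ∈ N) (u v w : L) : T.br u v w ∈ N := by
  have h3 : ∀ i, ∀ v w, T.br (x i) v w ∈ N := fun i => T.mem_of_basis₂ x N (x i) (h i)
  exact mem_of_basis x N ((T.br.flip v).flip w) (fun i => by simpa using h3 i v w) u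

lemma mem_of_span₁ (N : Submodule F L) (S : Set L)
    (h : ∀ a ∈ S, ∀ v w : L, T.br a v w ∈ N) :
    ∀ a ∈ Submodule.span F S, ∀ v w : L, T.br a v w ∈ N := by
  intro a ha v w
  have hle : Submodule.span F S ≤ N.comap ((T.br.flip v).flip w) :=
    Submodule.span_le.mpr (fun s hs => by simpa using h s hs v w)
  simpa using hle ha

lemma mem_of_span₂ (N : Submodule F L) (S1 S2 : Set L)
    (h : ∀ a ∈ S1, ∀ b ∈ S2, ∀ w : L, T.br a b w ∈ N) :
    ∀ a ∈ Submodule.span F S1, ∀ b ∈ Submodule.span F S2, ∀ w : L, T.br a b w ∈ N := by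
  have hstep : ∀ a ∈ S1, ∀ b ∈ Submodule.span F S2, ∀ w : L, T.br a b w ∈ N := by
    intro a haS b hb w
    have hle : Submodule.span F S2 ≤ N.comap ((T.br a).flip w) :=
      Submodule.span_le.mpr (fun s hs => by simpa using h a haS s hs w)
    simpa using hle hb
  intro a ha b hb w
  have hle : Submodule.span F S1 ≤ N.comap ((T.br.flip b).flip w) :=
    Submodule.span_le.mpr (fun s hs => by simpa using hstep s hs b hb w)
  simpa using hle ha

lemma mem_of_span₃ (N : Submodule F L) (S1 S2 S3 : Set L)
    (h : ∀ a ∈ S1, ∀ b ∈ S2, ∀ c ∈ S3, T.br a b c ∈ N) :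
    ∀ a ∈ Submodule.span F S1, ∀ b ∈ Submodule.span F S2, ∀ c ∈ Submodule.span F S3,
      T.br a b c ∈ N := by
  have h1 : ∀ a ∈ S1, ∀ b ∈ S2, ∀ c ∈ Submodule.span F S3, T.br a b c ∈ N := by
    intro a ha b hb c hc
    have hle : Submodule.span F S3 ≤ N.comap (T.br a b) :=
      Submodule.span_le.mpr (fun s hs => by simpa using h a ha b hb s hs)
    simpa using hle hc
  have h2 : ∀ a ∈ S1, ∀ b ∈ Submodule.span F S2, ∀ c ∈ Submodule.span F S3,
      T.br a b c ∈ N := by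
    intro a ha b hb c hc
    have hle : Submodule.span F S2 ≤ N.comap ((T.br a).flip c) :=
      Submodule.span_le.mpr (fun s hs => by simpa using h1 a ha s hs c hc)
    simpa using hle hb
  intro a ha b hb c hc
  have hle : Submodule.span F S1 ≤ N.comap ((T.br.flip b).flip c) :=
    Submodule.span_le.mpr (fun s hs => by simpa using h2 s hs b hb c hc)
  simpa using hle ha

lemma key {m : ℕ} (hm : 4 ≤ m) (x : Basis (Fin m) F L)
    (hbr : ∀ i : Fin m, 3 ≤ (i : ℕ) → T.br (x ⟨0, by linarith⟩) (x ⟨1, by linarith⟩) (x i) = x ⟨(i : ℕ) - 1, by have := i.isLt; omega⟩)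
    (hzero : ∀ i j k : Fin m,
      (¬ ∃ t : ℕ, 3 ≤ t ∧ t < m ∧ ({(i : ℕ), (j : ℕ), (k : ℕ)} : Finset ℕ) = {0, 1, t}) →
      T.br (x i) (x j) (x k) = 0) (i j k : Fin m) :
    T.br (x i) (x j) (x k) = 0 ∨
    ∃ t : ℕ, ∃ (ht3 : 3 ≤ t) (htm : t < m),
      ((i:ℕ) = 0 ∨ (i:ℕ) = 1 ∨ (i:ℕ) = t) ∧
      ((j:ℕ) = 0 ∨ (j:ℕ) = 1 ∨ (j:ℕ) = t) ∧
      ((k:ℕ) = 0 ∨ (k:ℕ) = 1 ∨ (k:ℕ) = t) ∧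
      ((i:ℕ) = 0 ∨ (j:ℕ) = 0 ∨ (k:ℕ) = 0) ∧
      ((i:ℕ) = 1 ∨ (j:ℕ) = 1 ∨ (k:ℕ) = 1) ∧
      (T.br (x i) (x j) (x k) = x ⟨t-1, by omega⟩ ∨
        T.br (x i) (x j) (x k) = - x ⟨t-1, by omega⟩) := by
  by_cases hc : ∃ t : ℕ, 3 ≤ t ∧ t < m ∧ ({(i : ℕ), (j : ℕ), (k : ℕ)} : Finset ℕ) = {0, 1, t}
  · obtain ⟨t, ht3, htm, hset⟩ := hc
    have hi : (i:ℕ) = 0 ∨ (i:ℕ) = 1 ∨ (i:ℕ) = t := by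
      have h : (i:ℕ) ∈ ({0,1,t} : Finset ℕ) := by rw [← hset]; simp
      simpa using h
    have hj : (j:ℕ) = 0 ∨ (j:ℕ) = 1 ∨ (j:ℕ) = t := by
      have h : (j:ℕ) ∈ ({0,1,t} : Finset ℕ) := by rw [← hset]; simp
      simpa using h
    have hk : (k:ℕ) = 0 ∨ (k:ℕ) = 1 ∨ (k:ℕ) = t := by
      have h : (k:ℕ) ∈ ({0,1,t} : Finset ℕ) := by rw [← hset]; simp
      simpa using h
    have h0 : (i:ℕ) = 0 ∨ (j:ℕ) = 0 ∨ (k:ℕ) = 0 := by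
      have h : (0:ℕ) ∈ ({(i:ℕ),(j:ℕ),(k:ℕ)} : Finset ℕ) := by rw [hset]; simp
      simpa [eq_comm] using h
    have h1 : (i:ℕ) = 1 ∨ (j:ℕ) = 1 ∨ (k:ℕ) = 1 := by
      have h : (1:ℕ) ∈ ({(i:ℕ),(j:ℕ),(k:ℕ)} : Finset ℕ) := by rw [hset]; simp
      simpa [eq_comm] using h
    have ht2 : (i:ℕ) = t ∨ (j:ℕ) = t ∨ (k:ℕ) = t := by
      have h : t ∈ ({(i:ℕ),(j:ℕ),(k:ℕ)} : Finset ℕ) := by rw [hset]; simp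
      simpa [eq_comm] using h
    refine Or.inr ⟨t, ht3, htm, hi, hj, hk, h0, h1, ?_⟩
    have h01t : T.br (x ⟨0, by omega⟩) (x ⟨1, by omega⟩) (x ⟨t, htm⟩) = x ⟨t-1, by omega⟩ :=
      hbr ⟨t, htm⟩ ht3
    rcases hi with hi|hi|hi <;> rcases hj with hj|hj|hj <;> rcases hk with hk|hk|hk <;>
      try (exfalso; omega)
    · rw [show i = ⟨0, by omega⟩ from Fin.ext hi, show j = ⟨1, by omega⟩ from Fin.ext hj,
        show k = ⟨t, htm⟩ from Fin.ext hk]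
      left; exact h01t
    · rw [show i = ⟨0, by omega⟩ from Fin.ext hi, show j = ⟨t, htm⟩ from Fin.ext hj,
        show k = ⟨1, by omega⟩ from Fin.ext hk]
      right; rw [T.swap23, h01t]
    · rw [show i = ⟨1, by omega⟩ from Fin.ext hi, show j = ⟨0, by omega⟩ from Fin.ext hj,
        show k = ⟨t, htm⟩ from Fin.ext hk]
      right; rw [T.swap12, h01t]
    · rw [show i = ⟨1, by omega⟩ from Fin.ext hi, show j = ⟨t, htm⟩ from Fin.ext hj,
        show k = ⟨0, by omega⟩ from Fin.ext hk]
      left; rw [T.swap13, T.swap23, neg_neg, h01t]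
    · rw [show i = ⟨t, htm⟩ from Fin.ext hi, show j = ⟨0, by omega⟩ from Fin.ext hj,
        show k = ⟨1, by omega⟩ from Fin.ext hk]
      left; rw [T.swap12, T.swap23, neg_neg, h01t]
    · rw [show i = ⟨t, htm⟩ from Fin.ext hi, show j = ⟨1, by omega⟩ from Fin.ext hj,
        show k = ⟨0, by omega⟩ from Fin.ext hk]
      right; rw [T.swap13, h01t]
  · exact Or.inl (hzero i j k hc)

end ThreeLie

/-- the `m`-dimensional 3-Lie algebra (`m ≥ 4`) with nonzero brackets
`[x₁,x₂,x_i] = x_{i−1}` for `4 ≤ i ≤ m` (indices shifted down by one) is nilpotent,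
`A = span{x₂,…,x_m}` is an `(m−1)`-dimensional hypo-abelian ideal,
`I = span{x₃,…,x_m}` is an `(m−2)`-dimensional abelian ideal, `α(L)=m−1`, `β(L)=m−2`. -/
theorem filiform_example {F : Type*} [Field F] {L : Type*} [AddCommGroup L] [Module F L]
    (T : ThreeLie F L) (m : ℕ) (hm : 4 ≤ m) (x : Basis (Fin m) F L)
    (hbr : ∀ i : Fin m, 3 ≤ (i : ℕ) → T.br (x ⟨0, by omega⟩) (x ⟨1, by omega⟩) (x i) = x ⟨(i : ℕ) - 1, by omega⟩)
    (hzero : ∀ i j k : Fin m,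
      (¬ ∃ t : ℕ, 3 ≤ t ∧ t < m ∧ ({(i : ℕ), (j : ℕ), (k : ℕ)} : Finset ℕ) = {0, 1, t}) →
      T.br (x i) (x j) (x k) = 0) :
    T.IsNilpotent ∧
    T.IsHypoAbelianIdeal (Submodule.span F {v | ∃ i : Fin m, 1 ≤ (i : ℕ) ∧ v = x i}) ∧
    finrank F (Submodule.span F {v | ∃ i : Fin m, 1 ≤ (i : ℕ) ∧ v = x i}) + 1 = m ∧
    T.IsAbelianIdeal (Submodule.span F {v | ∃ i : Fin m, 2 ≤ (i : ℕ) ∧ v = x i}) ∧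
    finrank F (Submodule.span F {v | ∃ i : Fin m, 2 ≤ (i : ℕ) ∧ v = x i}) + 2 = m ∧
    (∀ A : Submodule F L, T.IsAbelianSubalgebra A → finrank F A + 1 ≤ m) ∧
    (∀ I : Submodule F L, T.IsAbelianIdeal I → finrank F I + 2 ≤ m) := by
  have key := T.key hm x hbr hzero
  haveI : FiniteDimensional F L := Module.Finite.of_basis x
  have hLm : finrank F L = m := by rw [finrank_eq_card_basis x, Fintype.card_fin]
  have hx2ne : x ⟨2, by omega⟩ ≠ 0 := x.ne_zero _
  have h013 : T.br (x ⟨0, by omega⟩) (x ⟨1, by omega⟩) (x ⟨3, by omega⟩) = x ⟨2, by omega⟩ :=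
    hbr ⟨3, by omega⟩ (by norm_num)
  have h031 : T.br (x ⟨0, by omega⟩) (x ⟨3, by omega⟩) (x ⟨1, by omega⟩) = - x ⟨2, by omega⟩ := by
    rw [T.swap23, h013]
  have h103 : T.br (x ⟨1, by omega⟩) (x ⟨0, by omega⟩) (x ⟨3, by omega⟩) = - x ⟨2, by omega⟩ := by
    rw [T.swap12, h013]
  have h130 : T.br (x ⟨1, by omega⟩) (x ⟨3, by omega⟩) (x ⟨0, by omega⟩) = x ⟨2, by omega⟩ := by
    rw [T.swap13, T.swap23, neg_neg, h013]
  -- rank of spans of tails of the basis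
  have rank_aux : ∀ c : ℕ, c ≤ m →
      finrank F (Submodule.span F {v | ∃ i : Fin m, c ≤ (i : ℕ) ∧ v = x i}) = m - c := by
    intro c hc
    have hset : {v | ∃ i : Fin m, c ≤ (i : ℕ) ∧ v = x i}
        = Set.range (x ∘ (Subtype.val : {i : Fin m // c ≤ (i : ℕ)} → Fin m)) := by
      ext v
      constructor
      · rintro ⟨i, hi, rfl⟩; exact ⟨⟨i, hi⟩, rfl⟩
      · rintro ⟨⟨i, hi⟩, rfl⟩; exact ⟨i, hi, rfl⟩
    rw [hset, finrank_span_eq_card (x.linearIndependent.comp Subtype.val Subtype.val_injective)]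
    have e : {i : Fin m // c ≤ (i : ℕ)} ≃ Fin (m - c) :=
      { toFun := fun i => ⟨(i.1 : ℕ) - c, by have := i.1.isLt; have := i.2; omega⟩
        invFun := fun j => ⟨⟨(j : ℕ) + c, by have := j.isLt; omega⟩, Nat.le_add_left c j⟩
        left_inv := fun i => Subtype.ext (Fin.ext (by have := i.2; simp; omega))
        right_inv := fun j => Fin.ext (by simp) }
    rw [Fintype.card_congr e, Fintype.card_fin]
  -- Nilpotency
  have hnil : T.IsNilpotent := by
    have hstep : ∀ n : ℕ, T.lcs (n + 1) ≤
        Submodule.span F {v | ∃ s : Fin m, 2 ≤ (s : ℕ) ∧ (s : ℕ) ≤ m - 2 - n ∧ v = x s} := by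
      intro n
      induction n with
      | zero =>
        rw [show T.lcs 1 = Submodule.span F {z | ∃ a ∈ T.lcs 0, ∃ u v : L, z = T.br a u v} from rfl]
        refine Submodule.span_le.mpr ?_
        rintro _ ⟨a, -, u, v, rfl⟩
        refine T.mem_of_basis₃ x _ ?_ a u v
        intro i j k
        rcases key i j k with h | ⟨t, ht3, htm, -, -, -, -, -, hval | hval⟩
        · rw [h]; exact zero_mem _
        · rw [hval]
          exact Submodule.subset_span ⟨⟨t - 1, by omega⟩, by simp only [Fin.val_mk]; omega,
            by simp only [Fin.val_mk]; omega, rfl⟩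
        · rw [hval]
          exact neg_mem (Submodule.subset_span ⟨⟨t - 1, by omega⟩, by simp only [Fin.val_mk]; omega,
            by simp only [Fin.val_mk]; omega, rfl⟩)
      | succ n ih =>
        rw [show T.lcs (n + 2) =
          Submodule.span F {z | ∃ a ∈ T.lcs (n + 1), ∃ u v : L, z = T.br a u v} from rfl]
        refine Submodule.span_le.mpr ?_
        rintro _ ⟨a, ha, u, v, rfl⟩
        refine T.mem_of_span₁ _ _ ?_ a (ih ha) u v
        rintro _ ⟨sf, hs2, hsB, rfl⟩ v w
        refine T.mem_of_basis₂ x _ _ ?_ v w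
        intro j k
        rcases key sf j k with h | ⟨t, ht3, htm, hsf, -, -, -, -, hval | hval⟩
        · rw [h]; exact zero_mem _
        · rw [hval]
          exact Submodule.subset_span ⟨⟨t - 1, by omega⟩, by simp only [Fin.val_mk]; omega,
            by simp only [Fin.val_mk]; omega, rfl⟩
        · rw [hval]
          exact neg_mem (Submodule.subset_span ⟨⟨t - 1, by omega⟩, by simp only [Fin.val_mk]; omega,
            by simp only [Fin.val_mk]; omega, rfl⟩)
    refine ⟨m, le_bot_iff.mp ?_⟩
    have h := hstep (m - 1)
    rw [show m - 1 + 1 = m by omega] at h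
    refine h.trans ?_
    have hempty : {v | ∃ s : Fin m, 2 ≤ (s : ℕ) ∧ (s : ℕ) ≤ m - 2 - (m - 1) ∧ v = x s} = ∅ := by
      ext v
      simp only [Set.mem_setOf_eq, Set.mem_empty_iff_false, iff_false]
      rintro ⟨s, h2, hle, -⟩
      omega
    rw [hempty, Submodule.span_empty]
  refine ⟨hnil, ?_, ?_, ?_, ?_, ?_, ?_⟩
  · -- hypo-abelian ideal A
    refine ⟨?_, ?_, ?_⟩
    · -- ideal
      intro a ha u v
      refine T.mem_of_span₁ _ _ ?_ a ha u v
      rintro _ ⟨sf, hs1, rfl⟩ v w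
      refine T.mem_of_basis₂ x _ _ ?_ v w
      intro j k
      rcases key sf j k with h | ⟨t, ht3, htm, -, -, -, -, -, hval | hval⟩
      · rw [h]; exact zero_mem _
      · rw [hval]
        exact Submodule.subset_span ⟨⟨t - 1, by omega⟩, by simp only [Fin.val_mk]; omega, rfl⟩
      · rw [hval]
        exact neg_mem (Submodule.subset_span ⟨⟨t - 1, by omega⟩,
          by simp only [Fin.val_mk]; omega, rfl⟩)
    · -- abelian subalgebra
      intro a ha b hb c hc
      have h := T.mem_of_span₃ ⊥ _ _ _ ?_ a ha b hb c hc
      · simpa using h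
      · rintro _ ⟨if_, hi1, rfl⟩ _ ⟨jf, hj1, rfl⟩ _ ⟨kf, hk1, rfl⟩
        rcases key if_ jf kf with h | ⟨t, ht3, htm, -, -, -, h0, -, -⟩
        · rw [h]; exact zero_mem _
        · exfalso; omega
    · -- not abelian as an ideal
      intro hall
      apply hx2ne
      rw [← h130]
      exact hall (x ⟨1, by omega⟩)
        (Submodule.subset_span ⟨⟨1, by omega⟩, by simp, rfl⟩)
        (x ⟨3, by omega⟩)
        (Submodule.subset_span ⟨⟨3, by omega⟩, by simp, rfl⟩)
        (x ⟨0, by omega⟩)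
  · rw [rank_aux 1 (by omega)]; omega
  · -- abelian ideal I
    refine ⟨?_, ?_⟩
    · intro a ha u v
      refine T.mem_of_span₁ _ _ ?_ a ha u v
      rintro _ ⟨sf, hs2, rfl⟩ v w
      refine T.mem_of_basis₂ x _ _ ?_ v w
      intro j k
      rcases key sf j k with h | ⟨t, ht3, htm, -, -, -, -, -, hval | hval⟩
      · rw [h]; exact zero_mem _
      · rw [hval]
        exact Submodule.subset_span ⟨⟨t - 1, by omega⟩, by simp only [Fin.val_mk]; omega, rfl⟩
      · rw [hval]
        exact neg_mem (Submodule.subset_span ⟨⟨t - 1, by omega⟩,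
          by simp only [Fin.val_mk]; omega, rfl⟩)
    · intro a ha b hb w
      have h := T.mem_of_span₂ ⊥ _ _ ?_ a ha b hb w
      · simpa using h
      · rintro _ ⟨if_, hi2, rfl⟩ _ ⟨jf, hj2, rfl⟩ w
        refine ThreeLie.mem_of_basis x ⊥ (T.br (x if_) (x jf)) ?_ w
        intro k
        rcases key if_ jf k with h | ⟨t, ht3, htm, -, -, -, h0, h1, -⟩
        · rw [h]; exact zero_mem _
        · exfalso; omega
  · rw [rank_aux 2 (by omega)]; omega
  · -- α(L) ≤ m - 1
    intro A hA
    by_contra hcon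
    have hle : finrank F A ≤ m := hLm ▸ Submodule.finrank_le A
    have htop : A = ⊤ := Submodule.eq_top_of_finrank_eq (by rw [hLm]; omega)
    have hmem : ∀ v : L, v ∈ A := fun v => htop ▸ Submodule.mem_top
    exact hx2ne (h013 ▸ hA _ (hmem _) _ (hmem _) _ (hmem _))
  · -- β(L) ≤ m - 2
    intro J hJ
    obtain ⟨hJid, hJab⟩ := hJ
    by_contra hcon
    have hJle : finrank F J ≤ m := hLm ▸ Submodule.finrank_le J
    have pair : ∀ p q : Fin m, p ≠ q → ∃ a ∈ J, a ≠ 0 ∧ ∃ α β : F, α • x p + β • x q = a := by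
      intro p q hpq
      have hinj : Function.Injective ![p, q] := by
        intro a b hab
        fin_cases a <;> fin_cases b <;>
          simp only [Matrix.cons_val_zero, Matrix.cons_val_one, Matrix.head_cons] at hab <;>
          first
          | rfl
          | exact absurd hab hpq
          | exact absurd hab.symm hpq
      have hli : LinearIndependent F (x ∘ ![p, q]) :=
        x.linearIndependent.comp ![p, q] hinj
      have hr : Set.range (x ∘ ![p, q]) = {x p, x q} := by
        rw [Set.range_comp]
        have : Set.range ![p, q] = {p, q} := by
          ext s
          simp [Fin.exists_fin_two, eq_comm, or_comm]
        rw [this]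
        simp [Set.image_insert_eq]
      have hWrank : finrank F (Submodule.span F ({x p, x q} : Set L)) = 2 := by
        rw [← hr, finrank_span_eq_card hli, Fintype.card_fin]
      have hform := Submodule.finrank_sup_add_finrank_inf_eq J (Submodule.span F {x p, x q})
      have hsup : finrank F ↥(J ⊔ Submodule.span F ({x p, x q} : Set L)) ≤ m := by
        have h := Submodule.finrank_le (J ⊔ Submodule.span F ({x p, x q} : Set L))
        rw [hLm] at h
        exact h
      have hpos : 0 < finrank F ↥(J ⊓ Submodule.span F {x p, x q}) := by omega
      have hne : J ⊓ Submodule.span F ({x p, x q} : Set L) ≠ ⊥ := by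
        intro hbot
        rw [hbot] at hpos
        simp at hpos
      obtain ⟨a, haJW, ha0⟩ := Submodule.exists_mem_ne_zero_of_ne_bot hne
      obtain ⟨α, β, hab⟩ := Submodule.mem_span_pair.mp haJW.2
      exact ⟨a, haJW.1, ha0, α, β, hab⟩
    obtain ⟨a, haJ, ha0, α, β, hab⟩ :=
      pair ⟨0, by omega⟩ ⟨1, by omega⟩ (by simp [Fin.ext_iff])
    obtain ⟨b, hbJ, hb0, γ, δ, hcd⟩ :=
      pair ⟨0, by omega⟩ ⟨3, by omega⟩ (by simp [Fin.ext_iff])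
    have had : δ * α = 0 := by
      have h := hJab a haJ b hbJ (x ⟨1, by omega⟩)
      rw [← hab, ← hcd] at h
      simp only [map_add, map_smul, LinearMap.add_apply, LinearMap.smul_apply,
        T.alt₁₂, T.alt₁₃, h031, smul_zero, zero_add, add_zero, smul_neg, smul_smul,
        neg_eq_zero] at h
      rcases smul_eq_zero.mp h with h' | h'
      · exact h'
      · exact absurd h' hx2ne
    have hbc : γ * β = 0 := by
      have h := hJab a haJ b hbJ (x ⟨3, by omega⟩)
      rw [← hab, ← hcd] at h
      simp only [map_add, map_smul, LinearMap.add_apply, LinearMap.smul_apply,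
        T.alt₁₂, T.alt₂₃, h103, smul_zero, zero_add, add_zero, smul_neg, smul_smul,
        neg_eq_zero] at h
      rcases smul_eq_zero.mp h with h' | h'
      · exact h'
      · exact absurd h' hx2ne
    have hbd : δ * β = 0 := by
      have h := hJab a haJ b hbJ (x ⟨0, by omega⟩)
      rw [← hab, ← hcd] at h
      simp only [map_add, map_smul, LinearMap.add_apply, LinearMap.smul_apply,
        T.alt₁₂, T.alt₁₃, T.alt₂₃, h130, smul_zero, zero_add, add_zero, smul_smul] at h
      rcases smul_eq_zero.mp h with h' | h'
      · exact h'
      · exact absurd h' hx2ne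
    have hane : α ≠ 0 ∨ β ≠ 0 := by
      by_contra h
      push_neg at h
      exact ha0 (by rw [← hab, h.1, h.2]; simp)
    have hbne : γ ≠ 0 ∨ δ ≠ 0 := by
      by_contra h
      push_neg at h
      exact hb0 (by rw [← hcd, h.1, h.2]; simp)
    have hδ : δ = 0 := by
      by_contra hδ
      have hα : α = 0 := by rcases mul_eq_zero.mp had with h | h; exact absurd h hδ; exact h
      have hβ : β = 0 := by rcases mul_eq_zero.mp hbd with h | h; exact absurd h hδ; exact h
      rcases hane with h | h
      · exact h hα
      · exact h hβ
    have hγ : γ ≠ 0 := by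
      rcases hbne with h | h
      · exact h
      · exact absurd hδ h
    have hβ : β = 0 := by
      rcases mul_eq_zero.mp hbc with h | h
      · exact absurd h hγ
      · exact h
    have hα : α ≠ 0 := by
      rcases hane with h | h
      · exact h
      · exact absurd hβ h
    have hx0J : x ⟨0, by omega⟩ ∈ J := by
      have h := J.smul_mem α⁻¹ haJ
      rwa [← hab, hβ, zero_smul, add_zero, smul_smul, inv_mul_cancel₀ hα, one_smul] at h
    obtain ⟨c, hcJ, hc0, ε, ζ, hef⟩ :=
      pair ⟨1, by omega⟩ ⟨3, by omega⟩ (by simp [Fin.ext_iff])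
    have hζ : ζ = 0 := by
      have h := hJab _ hx0J c hcJ (x ⟨1, by omega⟩)
      rw [← hef] at h
      simp only [map_add, map_smul, LinearMap.add_apply, LinearMap.smul_apply,
        T.alt₂₃, h031, smul_zero, zero_add, add_zero, smul_neg, neg_eq_zero] at h
      rcases smul_eq_zero.mp h with h' | h'
      · exact h'
      · exact absurd h' hx2ne
    have hε : ε ≠ 0 := by
      intro hε
      exact hc0 (by rw [← hef, hε, hζ]; simp)
    have hx1J : x ⟨1, by omega⟩ ∈ J := by
      have h := J.smul_mem ε⁻¹ hcJ
      rwa [← hef, hζ, zero_smul, add_zero, smul_smul, inv_mul_cancel₀ hε, one_smul] at h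
    have h := hJab _ hx0J _ hx1J (x ⟨3, by omega⟩)
    rw [h013] at h
    exact hx2ne h
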